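/- Let 0 < p ≤ 1 and z ∈ ℝ with |z| ≤ 1. Let G : ℕ → ℝ → ℝ satisfy G_0(x) = 1 for all x ∈ [0,1], and for every n ≥ 1 and x ∈ [0,1], G_n(x) = p·z·∫_0^x G_{n−1}(u) du + (1 − p·x)·G_{n−1}(x). Then for every x ∈ [0,1] and every y ∈ (−1,1), the series Σ_{n=0}^{∞} G_n(x)·y^n converges and equals (1 − y)^{−z} · (1 − y + p·x·y)^{z−1}, where the powers are real powers of the positive reals 1 − y and 1 − y + p·x·y. -/

import Mathlib

open MeasureTheory intervalIntegral Finset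



noncomputable def gb (s : ℝ) (k : ℕ) : ℝ := (∏ i ∈ Finset.range k, (s - i)) / k.factorial

lemma gb_zero (s : ℝ) : gb s 0 = 1 := by simp [gb]

lemma gb_succ (s : ℝ) (k : ℕ) : gb s (k + 1) = gb s k * (s - k) / (k + 1) := by
  rw [gb, gb, Finset.prod_range_succ, Nat.factorial_succ]
  rw [div_mul_eq_mul_div, div_div]
  congr 1
  push_cast; ring

lemma gb_pascal (s : ℝ) (k : ℕ) : gb (s + 1) (k + 1) = gb s (k + 1) + gb s k := by
  have h1 : ∏ i ∈ Finset.range (k + 1), (s + 1 - i) = (s + 1) * ∏ i ∈ Finset.range k, (s - i) := by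
    rw [Finset.prod_range_succ']
    have : ∀ i ∈ Finset.range k, (s + 1 - ((i:ℕ) + 1 : ℕ)) = s - i := by
      intro i _; push_cast; ring
    rw [Finset.prod_congr rfl this]
    push_cast; ring
  have hk : ((k:ℝ) + 1) ≠ 0 := by positivity
  have hf : (k.factorial : ℝ) ≠ 0 := by positivity
  simp only [gb, Nat.factorial_succ, h1, Finset.prod_range_succ]
  push_cast
  field_simp
  ring

lemma abs_gb_le {s : ℝ} (hs : |s| ≤ 1) (k : ℕ) : |gb s k| ≤ 1 := by
  have h : |∏ i ∈ Finset.range k, (s - i)| ≤ (k.factorial : ℝ) := by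
    rw [Finset.abs_prod]
    calc ∏ i ∈ Finset.range k, |s - (i : ℝ)| ≤ ∏ i ∈ Finset.range k, ((i : ℝ) + 1) := by
          apply Finset.prod_le_prod (fun i _ => abs_nonneg _)
          intro i _
          calc |s - i| ≤ |s| + |(i : ℝ)| := abs_sub _ _
            _ ≤ 1 + i := by
              have hi : |(i : ℝ)| = i := abs_of_nonneg (Nat.cast_nonneg i)
              rw [hi]; linarith
            _ = i + 1 := by ring
      _ = (k.factorial : ℝ) := by
          have := Finset.prod_range_add_one_eq_factorial k
          push_cast [← this]
          ring
  rw [gb, abs_div, abs_of_nonneg (by positivity : (0:ℝ) ≤ (k.factorial : ℝ))]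
  rw [div_le_one (by positivity)]
  exact h

lemma gb_vandermonde (j : ℕ) : ∀ (n : ℕ) (s : ℝ),
    ∑ k ∈ Finset.range (n + 1), (j.choose (n - k) : ℝ) * gb s k = gb (j + s) n := by
  induction j with
  | zero =>
    intro n s
    rw [Finset.sum_eq_single n]
    · simp
    · intro k hk hkn
      simp only [Finset.mem_range] at hk
      rw [Nat.choose_eq_zero_of_lt (by omega)]
      simp
    · intro h; simp at h
  | succ j ih =>
    intro n s
    cases n with
    | zero => simp [gb]
    | succ n =>
      rw [Finset.sum_range_succ]
      have step : ∀ k ∈ Finset.range (n + 1),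
          ((j + 1).choose (n + 1 - k) : ℝ) * gb s k
            = (j.choose (n - k) : ℝ) * gb s k + (j.choose (n + 1 - k) : ℝ) * gb s k := by
        intro k hk
        simp only [Finset.mem_range] at hk
        have h1 : n + 1 - k = (n - k) + 1 := by omega
        rw [h1, Nat.choose_succ_succ, Nat.cast_add, add_mul, Nat.succ_eq_add_one, ← h1]
      rw [Finset.sum_congr rfl step, Finset.sum_add_distrib]
      have e1 : ∑ k ∈ Finset.range (n + 1), (j.choose (n - k) : ℝ) * gb s k = gb (j + s) n := ih n s
      have e2 : ∑ k ∈ Finset.range (n + 1), (j.choose (n + 1 - k) : ℝ) * gb s k + gb s (n + 1)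
          = gb (j + s) (n + 1) := by
        have := ih (n + 1) s
        rw [Finset.sum_range_succ] at this
        simpa using this
      have hc : ((j + 1 : ℕ) : ℝ) + s = (j + s) + 1 := by push_cast; ring
      rw [hc, gb_pascal]
      have hls : ((j+1).choose (n + 1 - (n+1)) : ℝ) * gb s (n+1) = gb s (n + 1) := by
        rw [show n + 1 - (n + 1) = 0 by omega]; simp
      rw [hls]
      linarith [e1, e2]

noncomputable def Ak (z : ℝ) (k : ℕ) : ℝ := (∏ i ∈ Finset.range k, (z + i)) / k.factorial
lemma Ak_eq_gb (z : ℝ) (k : ℕ) : Ak z k = (-1) ^ k * gb (-z) k := by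
  rw [Ak, gb]
  rw [show ∏ i ∈ Finset.range k, (z + (i:ℝ)) = ∏ i ∈ Finset.range k, (-1) * (-z - i) by
    apply Finset.prod_congr rfl; intro i _; ring]
  rw [Finset.prod_mul_distrib, Finset.prod_const, Finset.card_range]
  ring

lemma key_prod (z : ℝ) (n : ℕ) :
    ∏ i ∈ Finset.range n, ((n : ℝ) - z - i) = (-1) ^ n * ∏ i ∈ Finset.range n, (z - 1 - i) := by
  have h := Finset.prod_range_reflect (fun j => (z - 1 - (j : ℝ))) n
  have e1 : ∏ i ∈ Finset.range n, ((n : ℝ) - z - i)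
      = ∏ i ∈ Finset.range n, (-1) * (z - 1 - ((n - 1 - i : ℕ) : ℝ)) := by
    apply Finset.prod_congr rfl
    intro i hi
    simp only [Finset.mem_range] at hi
    have hc : ((n - 1 - i : ℕ) : ℝ) = (n : ℝ) - 1 - i := by
      have h2 : n - 1 - i = n - (1 + i) := by omega
      rw [h2, Nat.cast_sub (by omega)]
      push_cast; ring
    rw [hc]; ring
  rw [e1, Finset.prod_mul_distrib, Finset.prod_const, Finset.card_range, h]

lemma bridge (z : ℝ) (n : ℕ) :
    ∑ k ∈ Finset.range (n + 1), (n.choose k : ℝ) * (-1) ^ (n - k) * Ak z k = gb (z - 1) n := by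
  have e1 : ∀ k ∈ Finset.range (n + 1),
      (n.choose k : ℝ) * (-1) ^ (n - k) * Ak z k
        = (-1) ^ n * ((n.choose (n - k) : ℝ) * gb (-z) k) := by
    intro k hk
    simp only [Finset.mem_range] at hk
    rw [Ak_eq_gb, Nat.choose_symm (by omega)]
    have : ((-1 : ℝ)) ^ (n - k) * (-1) ^ k = (-1) ^ n := by
      rw [← pow_add]; congr 1; omega
    calc (n.choose k : ℝ) * (-1) ^ (n - k) * ((-1) ^ k * gb (-z) k)
        = ((-1) ^ (n - k) * (-1) ^ k) * ((n.choose k : ℝ) * gb (-z) k) := by ring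
      _ = (-1) ^ n * ((n.choose k : ℝ) * gb (-z) k) := by rw [this]
  rw [Finset.sum_congr rfl e1, ← Finset.mul_sum, gb_vandermonde n n (-z)]
  rw [gb, gb]
  rw [show (n : ℝ) + -z = (n : ℝ) - z by ring]
  rw [show ∏ i ∈ Finset.range n, ((n:ℝ) - z - i) = (-1)^n * ∏ i ∈ Finset.range n, (z - 1 - i) from
    key_prod z n]
  rw [mul_div_assoc, ← mul_assoc, ← mul_pow]
  simp

lemma formB (z v : ℝ) (n : ℕ) :
    ∑ k ∈ Finset.range (n + 1), (n.choose k : ℝ) * Ak z k * v ^ k * (1 - v) ^ (n - k)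
      = ∑ j ∈ Finset.range (n + 1), (n.choose j : ℝ) * gb (z - 1) j * v ^ j := by
  have expand : ∀ k, (1 - v) ^ k = ∑ i ∈ Finset.range (k + 1), (k.choose i : ℝ) * (-v) ^ i := by
    intro k
    rw [show (1 - v) = (-v) + 1 by ring, add_pow]
    apply Finset.sum_congr rfl
    intro i _
    ring
  -- LHS as double sum
  have lhs_eq : ∑ k ∈ Finset.range (n + 1), (n.choose k : ℝ) * Ak z k * v ^ k * (1 - v) ^ (n - k)
      = ∑ x ∈ (Finset.range (n + 1)).sigma (fun k => Finset.range (n - k + 1)),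
          (n.choose x.1 : ℝ) * Ak z x.1 * v ^ x.1 * (((n - x.1).choose x.2 : ℝ) * (-v) ^ x.2) := by
    rw [Finset.sum_sigma]
    apply Finset.sum_congr rfl
    intro k _
    rw [expand (n - k), Finset.mul_sum]
  -- RHS as double sum
  have rhs_eq : ∑ j ∈ Finset.range (n + 1), (n.choose j : ℝ) * gb (z - 1) j * v ^ j
      = ∑ x ∈ (Finset.range (n + 1)).sigma (fun j => Finset.range (j + 1)),
          (n.choose x.1 : ℝ) * ((x.1.choose x.2 : ℝ) * (-1) ^ (x.1 - x.2) * Ak z x.2) * v ^ x.1 := by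
    rw [Finset.sum_sigma]
    apply Finset.sum_congr rfl
    intro j _
    rw [← bridge z j, Finset.mul_sum, Finset.sum_mul]
  rw [lhs_eq, rhs_eq]
  apply Finset.sum_nbij' (i := fun x => (⟨x.1 + x.2, x.1⟩ : Σ _ : ℕ, ℕ))
    (j := fun x => (⟨x.2, x.1 - x.2⟩ : Σ _ : ℕ, ℕ))
  · intro a ha
    simp only [Finset.mem_sigma, Finset.mem_range] at ha ⊢
    omega
  · intro a ha
    simp only [Finset.mem_sigma, Finset.mem_range] at ha ⊢
    omega
  · intro a ha
    simp only [Finset.mem_sigma, Finset.mem_range] at ha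
    obtain ⟨k, i⟩ := a
    simp only
    have h : k + i - k = i := by omega
    rw [h]
  · intro a ha
    simp only [Finset.mem_sigma, Finset.mem_range] at ha
    obtain ⟨j, k⟩ := a
    simp only at ha ⊢
    have h : k + (j - k) = j := by omega
    rw [h]
  · intro a ha
    obtain ⟨k, i⟩ := a
    simp only [Finset.mem_sigma, Finset.mem_range] at ha
    simp only
    have h1 : k + i - k = i := by omega
    have h2 : (n.choose (k + i) : ℝ) * ((k + i).choose k : ℝ)
        = (n.choose k : ℝ) * ((n - k).choose i : ℝ) := by
      have := Nat.choose_mul (n := n) (show k ≤ k + i by omega)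
      have h3 : k + i - k = i := by omega
      rw [h3] at this
      exact_mod_cast congrArg (fun m : ℕ => (m : ℝ)) this
    rw [h1]
    have h4 : (-v : ℝ) ^ i = (-1) ^ i * v ^ i := by rw [neg_pow]
    rw [h4, pow_add]
    linear_combination (-(Ak z k * v ^ k * v ^ i * (-1:ℝ) ^ i)) * h2

lemma key_rec (z v : ℝ) (n : ℕ) :
    z * (∑ k ∈ Finset.range (n + 1),
        (n.choose k : ℝ) * gb (z - 1) k * v ^ (k + 1) / (k + 1))
      + (1 - v) * ∑ k ∈ Finset.range (n + 1), (n.choose k : ℝ) * gb (z - 1) k * v ^ k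
    = ∑ k ∈ Finset.range (n + 2), ((n + 1).choose k : ℝ) * gb (z - 1) k * v ^ k := by
  set b : ℕ → ℝ := fun k => (n.choose k : ℝ) * gb (z - 1) k with hb
  have per : ∀ k : ℕ, z * b k / (k + 1) + b (k + 1) - b k
      = ((n + 1).choose (k + 1) : ℝ) * gb (z - 1) (k + 1) := by
    intro k
    have hk : ((k : ℝ) + 1) ≠ 0 := by positivity
    simp only [hb, gb_succ, Nat.choose_succ_succ n k, Nat.cast_add]
    field_simp
    ring
  have e1 : z * (∑ k ∈ Finset.range (n + 1), b k * v ^ (k + 1) / (k + 1))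
      = ∑ k ∈ Finset.range (n + 1), (z * b k / (k + 1)) * v ^ (k + 1) := by
    rw [Finset.mul_sum]
    apply Finset.sum_congr rfl
    intro k _; ring
  have e2 : (1 - v) * ∑ k ∈ Finset.range (n + 1), b k * v ^ k
      = (∑ k ∈ Finset.range (n + 1), b k * v ^ k)
        - ∑ k ∈ Finset.range (n + 1), b k * v ^ (k + 1) := by
    rw [sub_mul, one_mul, Finset.mul_sum]
    congr 1
    apply Finset.sum_congr rfl
    intro k _; ring
  have e3 : ∑ k ∈ Finset.range (n + 1), b k * v ^ k
      = 1 + ∑ k ∈ Finset.range (n + 1), b (k + 1) * v ^ (k + 1) := by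
    rw [Finset.sum_range_succ' (fun k => b k * v ^ k) n,
      Finset.sum_range_succ (fun k => b (k + 1) * v ^ (k + 1)) n]
    have hb1 : b (n + 1) = 0 := by simp [hb, Nat.choose_succ_self]
    simp [hb1, hb, gb_zero]
    ring
  have e4 : ∑ k ∈ Finset.range (n + 2), ((n + 1).choose k : ℝ) * gb (z - 1) k * v ^ k
      = 1 + ∑ k ∈ Finset.range (n + 1),
          ((n + 1).choose (k + 1) : ℝ) * gb (z - 1) (k + 1) * v ^ (k + 1) := by
    rw [Finset.sum_range_succ' (fun k => ((n + 1).choose k : ℝ) * gb (z - 1) k * v ^ k) (n + 1)]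
    simp [gb_zero]
    ring
  have e5 : ∑ k ∈ Finset.range (n + 1), (z * b k / (k + 1)) * v ^ (k + 1)
        + ∑ k ∈ Finset.range (n + 1), b (k + 1) * v ^ (k + 1)
        - ∑ k ∈ Finset.range (n + 1), b k * v ^ (k + 1)
      = ∑ k ∈ Finset.range (n + 1),
          ((n + 1).choose (k + 1) : ℝ) * gb (z - 1) (k + 1) * v ^ (k + 1) := by
    rw [← Finset.sum_add_distrib, ← Finset.sum_sub_distrib]
    apply Finset.sum_congr rfl
    intro k _
    have := per k
    linear_combination v ^ (k + 1) * this
  simp only [hb] at e1 e2 e3 e5 ⊢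
  rw [e1, e2, e3, e4]
  linarith [e5]

section Binom
variable {α : ℝ} (hα : |α| ≤ 1)

include hα in
lemma binom_summable {t : ℝ} (ht : |t| < 1) : Summable (fun k => gb α k * t ^ k) := by
  apply Summable.of_norm_bounded (summable_geometric_of_lt_one (abs_nonneg t) ht)
  intro k
  rw [Real.norm_eq_abs, abs_mul, abs_pow]
  calc |gb α k| * |t| ^ k ≤ 1 * |t| ^ k := by
        apply mul_le_mul_of_nonneg_right (abs_gb_le hα k) (by positivity)
    _ = |t| ^ k := one_mul _

lemma deriv_bound_summable {ρ : ℝ} (hρ0 : 0 < ρ) (hρ : ρ < 1) :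
    Summable (fun k : ℕ => (k : ℝ) * ρ ^ (k - 1)) := by
  rw [← summable_nat_add_iff 1]
  have h1 : Summable (fun k : ℕ => ((k : ℝ) ^ 1) * ρ ^ k) :=
    summable_pow_mul_geometric_of_norm_lt_one 1 (by rwa [Real.norm_eq_abs, abs_of_pos hρ0])
  have h2 : Summable (fun k : ℕ => ρ ^ k) :=
    summable_geometric_of_lt_one hρ0.le hρ
  have := h1.add h2
  apply this.congr
  intro k
  simp
  ring

include hα in
lemma binom_hasDerivAt {r : ℝ} (hr : |r| < 1) :
    HasDerivAt (fun t => ∑' k : ℕ, gb α k * t ^ k)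
      (∑' k : ℕ, gb α k * ((k : ℝ) * r ^ (k - 1))) r := by
  set ρ : ℝ := (1 + |r|) / 2 with hρdef
  have hρ0 : 0 < ρ := by positivity
  have hρ1 : ρ < 1 := by rw [hρdef]; linarith
  have hrρ : |r| < ρ := by rw [hρdef]; linarith
  refine hasDerivAt_tsum_of_isPreconnected (deriv_bound_summable hρ0 hρ1)
    (isOpen_Ioo (a := -ρ) (b := ρ)) (convex_Ioo _ _).isPreconnected
    (g' := fun k y => gb α k * ((k : ℝ) * y ^ (k - 1))) (y₀ := 0) ?_ ?_ ?_ ?_ ?_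
  · intro k y _
    exact (hasDerivAt_pow k y).const_mul (gb α k)
  · intro k y hy
    have hyρ : |y| ≤ ρ := by
      rw [abs_le]
      exact ⟨hy.1.le, hy.2.le⟩
    rw [Real.norm_eq_abs, abs_mul, abs_mul, abs_pow]
    calc |gb α k| * (|(k : ℝ)| * |y| ^ (k - 1)) ≤ 1 * ((k : ℝ) * ρ ^ (k - 1)) := by
          apply mul_le_mul (abs_gb_le hα k)
          · apply mul_le_mul (le_of_eq (abs_of_nonneg (Nat.cast_nonneg k)))
              (pow_le_pow_left₀ (abs_nonneg y) hyρ _) (by positivity) (Nat.cast_nonneg k)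
          · positivity
          · norm_num
      _ = (k : ℝ) * ρ ^ (k - 1) := one_mul _
  · exact ⟨by linarith, by linarith⟩
  · exact binom_summable hα (by simp : |(0:ℝ)| < 1)
  · exact ⟨by linarith [abs_le.mp hr.le, neg_abs_le r], by linarith [le_abs_self r]⟩
end Binom

section Binom2
variable {α : ℝ} (hα : |α| ≤ 1)

include hα in
lemma binom_deriv_identity {t : ℝ} (ht : |t| < 1) :
    (1 + t) * (∑' k : ℕ, gb α k * ((k : ℝ) * t ^ (k - 1)))
      = α * ∑' k : ℕ, gb α k * t ^ k := by
  set ρ : ℝ := (1 + |t|) / 2 with hρdef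
  have hρ0 : 0 < ρ := by positivity
  have hρ1 : ρ < 1 := by rw [hρdef]; linarith
  have htρ : |t| ≤ ρ := by rw [hρdef]; linarith
  have hs_der : Summable (fun k : ℕ => gb α k * ((k : ℝ) * t ^ (k - 1))) := by
    apply Summable.of_norm_bounded (deriv_bound_summable hρ0 hρ1)
    intro k
    rw [Real.norm_eq_abs, abs_mul, abs_mul, abs_pow]
    calc |gb α k| * (|(k : ℝ)| * |t| ^ (k - 1)) ≤ 1 * ((k : ℝ) * ρ ^ (k - 1)) := by
          apply mul_le_mul (abs_gb_le hα k)
          · exact mul_le_mul (le_of_eq (abs_of_nonneg (Nat.cast_nonneg k)))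
              (pow_le_pow_left₀ (abs_nonneg t) htρ _) (by positivity) (Nat.cast_nonneg k)
          · positivity
          · norm_num
      _ = (k : ℝ) * ρ ^ (k - 1) := one_mul _
  have hs_kρ : Summable (fun k : ℕ => (k : ℝ) * ρ ^ k) := by
    have h1 : Summable (fun k : ℕ => ((k : ℝ) ^ 1) * ρ ^ k) :=
      summable_pow_mul_geometric_of_norm_lt_one 1 (by rwa [Real.norm_eq_abs, abs_of_pos hρ0])
    apply h1.congr; intro k; simp
  have hs_kt : Summable (fun k : ℕ => gb α k * ((k : ℝ) * t ^ k)) := by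
    apply Summable.of_norm_bounded hs_kρ
    intro k
    rw [Real.norm_eq_abs, abs_mul, abs_mul, abs_pow]
    calc |gb α k| * (|(k : ℝ)| * |t| ^ k) ≤ 1 * ((k : ℝ) * ρ ^ k) := by
          apply mul_le_mul (abs_gb_le hα k)
          · exact mul_le_mul (le_of_eq (abs_of_nonneg (Nat.cast_nonneg k)))
              (pow_le_pow_left₀ (abs_nonneg t) htρ _) (by positivity) (Nat.cast_nonneg k)
          · positivity
          · norm_num
      _ = (k : ℝ) * ρ ^ k := one_mul _
  have hs_f : Summable (fun k : ℕ => gb α k * t ^ k) := binom_summable hα ht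
  have claim1 : t * (∑' k : ℕ, gb α k * ((k : ℝ) * t ^ (k - 1)))
      = ∑' k : ℕ, gb α k * ((k : ℝ) * t ^ k) := by
    rw [← tsum_mul_left]
    apply tsum_congr
    intro k
    cases k with
    | zero => simp
    | succ k =>
      simp only [Nat.add_sub_cancel]
      rw [pow_succ]
      ring
  have claim2 : (∑' k : ℕ, gb α k * ((k : ℝ) * t ^ (k - 1)))
      = α * (∑' k : ℕ, gb α k * t ^ k) - ∑' k : ℕ, gb α k * ((k : ℝ) * t ^ k) := by
    rw [Summable.tsum_eq_zero_add hs_der]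
    have h0 : gb α 0 * ((0 : ℕ) : ℝ) * (t ^ (0 - 1)) = 0 := by simp
    have hterm : ∀ k : ℕ, gb α (k + 1) * (((k + 1 : ℕ)) * t ^ (k + 1 - 1))
        = α * (gb α k * t ^ k) - gb α k * ((k : ℝ) * t ^ k) := by
      intro k
      have hk : ((k : ℝ) + 1) ≠ 0 := by positivity
      rw [gb_succ]
      simp only [Nat.add_sub_cancel]
      push_cast
      field_simp
    rw [tsum_congr hterm]
    rw [Summable.tsum_sub (hs_f.mul_left α) hs_kt]
    simp [tsum_mul_left]
  calc (1 + t) * (∑' k : ℕ, gb α k * ((k : ℝ) * t ^ (k - 1)))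
      = (∑' k : ℕ, gb α k * ((k : ℝ) * t ^ (k - 1)))
        + t * (∑' k : ℕ, gb α k * ((k : ℝ) * t ^ (k - 1))) := by ring
    _ = (α * (∑' k : ℕ, gb α k * t ^ k) - ∑' k : ℕ, gb α k * ((k : ℝ) * t ^ k))
        + ∑' k : ℕ, gb α k * ((k : ℝ) * t ^ k) := by rw [claim1, claim2]
    _ = α * ∑' k : ℕ, gb α k * t ^ k := by ring

include hα in
lemma binom_tsum_eq {r : ℝ} (hr : |r| < 1) :
    ∑' k : ℕ, gb α k * r ^ k = (1 + r) ^ α := by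
  set F : ℝ → ℝ := fun t => ∑' k : ℕ, gb α k * t ^ k with hF
  set Φ : ℝ → ℝ := fun t => F t * (1 + t) ^ (-α) with hΦ
  have hΦderiv : ∀ t : ℝ, |t| < 1 → HasDerivAt Φ 0 t := by
    intro t ht
    have habs := abs_lt.mp ht
    have h1t : (0 : ℝ) < 1 + t := by linarith
    have hFd := binom_hasDerivAt hα ht
    have hg : HasDerivAt (fun t : ℝ => (1 + t) ^ (-α)) (-α * (1 + t) ^ (-α - 1)) t := by
      have h0 : HasDerivAt (fun t : ℝ => 1 + t) 1 t := (hasDerivAt_id t).const_add 1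
      have h1 : HasDerivAt (fun x : ℝ => x ^ (-α)) (-α * (1 + t) ^ (-α - 1)) (1 + t) :=
        Real.hasDerivAt_rpow_const (Or.inl (ne_of_gt h1t))
      have h2 := h1.comp t h0
      rw [mul_one] at h2
      exact h2
    have hprod := hFd.mul hg
    refine hprod.congr_deriv ?_
    symm
    have hid := binom_deriv_identity hα ht
    have hsplit := Real.rpow_add h1t (-α - 1) 1
    rw [Real.rpow_one, show -α - 1 + 1 = -α by ring] at hsplit
    linear_combination (-(∑' k : ℕ, gb α k * ((k : ℝ) * t ^ (k - 1))) : ℝ) * hsplit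
      + (-(1 + t) ^ (-α - 1) : ℝ) * hid
  have key : ∀ r : ℝ, |r| < 1 → Φ r = Φ 0 := by
    intro r hr
    have habs := abs_lt.mp hr
    rcases le_or_gt 0 r with h | h
    · have hc : ContinuousOn Φ (Set.Icc 0 r) := by
        intro x hx
        have : |x| < 1 := by rw [abs_lt]; constructor <;> [linarith [hx.1]; linarith [hx.2]]
        exact ((hΦderiv x this).continuousAt).continuousWithinAt
      have hd : ∀ x ∈ Set.Ico 0 r, HasDerivWithinAt Φ 0 (Set.Ici x) x := by
        intro x hx
        have : |x| < 1 := by rw [abs_lt]; constructor <;> [linarith [hx.1]; linarith [hx.2]]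
        exact (hΦderiv x this).hasDerivWithinAt
      exact constant_of_has_deriv_right_zero hc hd r (Set.right_mem_Icc.mpr h)
    · have hc : ContinuousOn Φ (Set.Icc r 0) := by
        intro x hx
        have : |x| < 1 := by rw [abs_lt]; constructor <;> [linarith [hx.1]; linarith [hx.2]]
        exact ((hΦderiv x this).continuousAt).continuousWithinAt
      have hd : ∀ x ∈ Set.Ico r 0, HasDerivWithinAt Φ 0 (Set.Ici x) x := by
        intro x hx
        have : |x| < 1 := by rw [abs_lt]; constructor <;> [linarith [hx.1]; linarith [hx.2]]
        exact (hΦderiv x this).hasDerivWithinAt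
      exact (constant_of_has_deriv_right_zero hc hd 0 (Set.right_mem_Icc.mpr h.le)).symm
  have hΦ0 : Φ 0 = 1 := by
    have hF0 : F 0 = 1 := by
      show (∑' k : ℕ, gb α k * (0 : ℝ) ^ k) = 1
      rw [tsum_eq_single 0 (fun k hk => by simp [zero_pow hk])]
      simp [gb_zero]
    show F 0 * (1 + (0 : ℝ)) ^ (-α) = 1
    rw [hF0]
    norm_num [Real.one_rpow]
  have hfin := key r hr
  rw [hΦ0] at hfin
  have h1r : (0 : ℝ) < 1 + r := by have := abs_lt.mp hr; linarith
  show F r = (1 + r) ^ α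
  calc F r = F r * ((1 + r) ^ (-α) * (1 + r) ^ α) := by
        rw [← Real.rpow_add h1r]; simp
    _ = (F r * (1 + r) ^ (-α)) * (1 + r) ^ α := by ring
    _ = (1 + r) ^ α := by rw [show F r * (1 + r) ^ (-α) = 1 from hfin, one_mul]

include hα in
theorem binom_hasSum {r : ℝ} (hr : |r| < 1) :
    HasSum (fun k : ℕ => gb α k * r ^ k) ((1 + r) ^ α) := by
  have h := (binom_summable hα hr).hasSum
  rwa [binom_tsum_eq hα hr] at h
end Binom2

theorem formA (p z : ℝ) (G : ℕ → ℝ → ℝ) (hG0 : ∀ x ∈ Set.Icc (0 : ℝ) 1, G 0 x = 1)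
    (hGrec : ∀ n : ℕ, ∀ x ∈ Set.Icc (0 : ℝ) 1,
      G (n + 1) x = p * z * (∫ u in (0 : ℝ)..x, G n u) + (1 - p * x) * G n x) :
    ∀ n : ℕ, ∀ x ∈ Set.Icc (0 : ℝ) 1,
      G n x = ∑ k ∈ Finset.range (n + 1), (n.choose k : ℝ) * gb (z - 1) k * (p * x) ^ k := by
  intro n
  induction n with
  | zero =>
    intro x hx
    rw [hG0 x hx]
    simp [gb_zero]
  | succ n ih =>
    intro x hx
    obtain ⟨hx0, hx1⟩ := hx
    have hcong : (∫ u in (0 : ℝ)..x, G n u)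
        = ∫ u in (0 : ℝ)..x,
            ∑ k ∈ Finset.range (n + 1), (n.choose k : ℝ) * gb (z - 1) k * p ^ k * u ^ k := by
      apply intervalIntegral.integral_congr
      intro u hu
      rw [Set.uIcc_of_le hx0] at hu
      have hu1 : u ∈ Set.Icc (0 : ℝ) 1 := ⟨hu.1, le_trans hu.2 hx1⟩
      rw [ih u hu1]
      apply Finset.sum_congr rfl
      intro k _
      rw [mul_pow]
      ring
    have hint : (∫ u in (0 : ℝ)..x,
          ∑ k ∈ Finset.range (n + 1), (n.choose k : ℝ) * gb (z - 1) k * p ^ k * u ^ k)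
        = ∑ k ∈ Finset.range (n + 1),
            (n.choose k : ℝ) * gb (z - 1) k * p ^ k * (x ^ (k + 1) / (k + 1)) := by
      rw [intervalIntegral.integral_finset_sum]
      · apply Finset.sum_congr rfl
        intro k _
        rw [intervalIntegral.integral_const_mul, integral_pow]
        norm_num
      · intro k _
        exact (Continuous.intervalIntegrable (by continuity) 0 x)
    rw [hGrec n x ⟨hx0, hx1⟩, hcong, hint]
    have := key_rec z (p * x) n
    rw [← this]
    congr 1
    · rw [Finset.mul_sum, Finset.mul_sum]
      apply Finset.sum_congr rfl
      intro k _
      rw [mul_pow]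
      ring
    · rw [ih x ⟨hx0, hx1⟩]

theorem stmt6 (p z : ℝ) (hp : 0 < p) (hp1 : p ≤ 1) (hz : |z| ≤ 1)
    (G : ℕ → ℝ → ℝ) (hG0 : ∀ x ∈ Set.Icc (0 : ℝ) 1, G 0 x = 1)
    (hGrec : ∀ n : ℕ, ∀ x ∈ Set.Icc (0 : ℝ) 1,
      G (n + 1) x = p * z * (∫ u in (0 : ℝ)..x, G n u) + (1 - p * x) * G n x) :
    ∀ x ∈ Set.Icc (0 : ℝ) 1, ∀ y ∈ Set.Ioo (-1 : ℝ) 1,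
      HasSum (fun n : ℕ => G n x * y ^ n)
        ((1 - y) ^ (-z) * (1 - y + p * x * y) ^ (z - 1)) := by
  intro x hx y hy
  obtain ⟨hx0, hx1⟩ := hx
  obtain ⟨hy0, hy1⟩ := hy
  set v : ℝ := p * x with hv
  have hv0 : 0 ≤ v := by positivity
  have hv1 : v ≤ 1 := by
    calc v = p * x := hv
      _ ≤ 1 * 1 := mul_le_mul hp1 hx1 hx0 zero_le_one
      _ = 1 := one_mul 1
  have hay : |y| < 1 := abs_lt.mpr ⟨hy0, hy1⟩
  set u : ℝ := v * y with hu
  set q : ℝ := (1 - v) * y with hq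
  have hw0 : (0 : ℝ) < 1 - q := by
    rcases le_or_gt 0 y with h | h
    · nlinarith
    · nlinarith
  have e1 : |u| = v * |y| := by
    rw [hu, abs_mul, abs_of_nonneg hv0]
  have e2 : |q| = (1 - v) * |y| := by
    rw [hq, abs_mul, abs_of_nonneg (by linarith : (0:ℝ) ≤ 1 - v)]
  have haq : |q| < 1 := by nlinarith [abs_nonneg y]
  have hau : |u| < 1 - |q| := by nlinarith [abs_nonneg y]
  have hAk : ∀ k, |Ak z k| ≤ 1 := by
    intro k
    rw [Ak_eq_gb, abs_mul, abs_pow, abs_neg, abs_one, one_pow, one_mul]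
    exact abs_gb_le (by rwa [abs_neg]) k
  -- the double-indexed family
  set f : ℕ × ℕ → ℝ :=
    fun km => Ak z km.1 * u ^ km.1 * (((km.1 + km.2).choose km.1 : ℝ)) * q ^ km.2 with hf
  -- summability of the absolute bound
  have hgsum : Summable (fun km : ℕ × ℕ =>
      (((km.1 + km.2).choose km.1 : ℝ)) * |u| ^ km.1 * |q| ^ km.2) := by
    rw [summable_prod_of_nonneg (by
      rw [Pi.le_def]
      intro km
      exact mul_nonneg (mul_nonneg (Nat.cast_nonneg _) (pow_nonneg (abs_nonneg _) _))
        (pow_nonneg (abs_nonneg _) _))]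
    constructor
    · intro k
      have h1 : Summable (fun m : ℕ => (((m + k).choose k : ℝ)) * |q| ^ m) :=
        summable_choose_mul_geometric_of_norm_lt_one k
          (by rw [Real.norm_eq_abs, abs_abs]; linarith [abs_nonneg u])
      apply (h1.mul_left (|u| ^ k)).congr
      intro m
      rw [Nat.add_comm k m]
      ring
    · have h2 : Summable (fun k : ℕ => (|u| / (1 - |q|)) ^ k * ((1 - |q|)⁻¹ * |u| ^ 0)) := by
        apply Summable.mul_right
        apply summable_geometric_of_lt_one (div_nonneg (abs_nonneg u) (by linarith [abs_nonneg u]))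
        rw [div_lt_one (by linarith [abs_nonneg u])]
        exact hau
      apply h2.congr
      intro k
      have hqlt : ‖|q|‖ < 1 := by rw [Real.norm_eq_abs, abs_abs]; linarith [abs_nonneg u]
      have htsum : ∑' m : ℕ, (((k + m).choose k : ℝ)) * |u| ^ k * |q| ^ m
          = |u| ^ k * (1 / (1 - |q|) ^ (k + 1)) := by
        rw [← (((hasSum_choose_mul_geometric_of_norm_lt_one k hqlt).mul_left
          (|u| ^ k)).tsum_eq)]
        apply tsum_congr
        intro m
        rw [Nat.add_comm k m]
        ring
      rw [htsum, div_pow, one_div]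
      have h1q : (0:ℝ) < 1 - |q| := by linarith [abs_nonneg u]
      rw [pow_succ]
      field_simp
  have hfsum : Summable f := by
    apply Summable.of_norm_bounded hgsum
    intro km
    rw [hf]
    simp only [Real.norm_eq_abs]
    rw [abs_mul, abs_mul, abs_mul, abs_pow, abs_pow]
    have := hAk km.1
    have hch : |(((km.1 + km.2).choose km.1 : ℕ) : ℝ)| = ((km.1 + km.2).choose km.1 : ℝ) :=
      abs_of_nonneg (Nat.cast_nonneg _)
    rw [hch]
    calc |Ak z km.1| * |u| ^ km.1 * ((km.1 + km.2).choose km.1 : ℝ) * |q| ^ km.2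
        = |Ak z km.1| * (|u| ^ km.1 * (((km.1 + km.2).choose km.1 : ℝ) * |q| ^ km.2)) := by ring
      _ ≤ 1 * (|u| ^ km.1 * (((km.1 + km.2).choose km.1 : ℝ) * |q| ^ km.2)) :=
          mul_le_mul_of_nonneg_right (hAk km.1) (by positivity)
      _ = ((km.1 + km.2).choose km.1 : ℝ) * |u| ^ km.1 * |q| ^ km.2 := by ring
  -- value of the double sum
  have hwne : (1 - q) ≠ 0 := ne_of_gt hw0
  have hr : |(-u) / (1 - q)| < 1 := by
    rw [abs_div, abs_neg, abs_of_pos hw0, div_lt_one hw0]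
    have : |q| ≥ 0 := abs_nonneg q
    have hq1 : 1 - q ≥ 1 - |q| := by linarith [le_abs_self q]
    linarith
  have houter : HasSum (fun k : ℕ => Ak z k * u ^ k * (1 / (1 - q) ^ (k + 1)))
      ((1 - q)⁻¹ * (1 + (-u) / (1 - q)) ^ (-z)) := by
    have hb := binom_hasSum (α := -z) (by rwa [abs_neg]) hr
    have h2 := hb.mul_left (1 - q)⁻¹
    have heq : (fun k : ℕ => Ak z k * u ^ k * (1 / (1 - q) ^ (k + 1)))
        = (fun i : ℕ => (1 - q)⁻¹ * (gb (-z) i * (-u / (1 - q)) ^ i)) := by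
      funext k
      rw [Ak_eq_gb, div_pow, neg_pow, pow_succ]
      field_simp
      ring
    rw [heq]
    exact h2
  have hinner : ∀ k : ℕ, HasSum (fun m : ℕ => f (k, m))
      (Ak z k * u ^ k * (1 / (1 - q) ^ (k + 1))) := by
    intro k
    have hqn : ‖q‖ < 1 := by rw [Real.norm_eq_abs]; exact haq
    have h1 := (hasSum_choose_mul_geometric_of_norm_lt_one k hqn).mul_left (Ak z k * u ^ k)
    have heq : (fun m : ℕ => f (k, m))
        = (fun m : ℕ => Ak z k * u ^ k * (((m + k).choose k : ℝ) * q ^ m)) := by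
      funext m
      rw [hf]
      simp only
      rw [Nat.add_comm k m]
      ring
    rw [heq]
    exact h1
  have htsumf : ∑' km : ℕ × ℕ, f km
      = (1 - q)⁻¹ * (1 + (-u) / (1 - q)) ^ (-z) := by
    rw [Summable.tsum_prod' hfsum (fun k => (hinner k).summable)]
    rw [tsum_congr (fun k => (hinner k).tsum_eq)]
    exact houter.tsum_eq
  -- identify the closed form
  have h1y : (0:ℝ) < 1 - y := by linarith
  have hwy : 1 - q = 1 - y + v * y := by rw [hq]; ring
  have hwu : 1 + (-u) / (1 - q) = (1 - y) / (1 - q) := by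
    rw [hu, hq]
    have hne : 1 - (1 - v) * y ≠ 0 := by rw [← hq]; exact hwne
    rw [eq_div_iff hne, add_mul, div_mul_cancel₀ _ hne]
    ring
  have hval : (1 - q)⁻¹ * (1 + (-u) / (1 - q)) ^ (-z)
      = (1 - y) ^ (-z) * (1 - y + v * y) ^ (z - 1) := by
    rw [hwu, Real.div_rpow h1y.le hw0.le, ← hwy]
    rw [Real.rpow_sub hw0, Real.rpow_one, Real.rpow_neg hw0.le z]
    have hwz : (0:ℝ) < (1 - q) ^ z := Real.rpow_pos_of_pos hw0 z
    have h1yz : (0:ℝ) < (1 - y) ^ (-z) := Real.rpow_pos_of_pos h1y (-z)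
    field_simp
  have hHasSumf : HasSum f ((1 - y) ^ (-z) * (1 - y + v * y) ^ (z - 1)) := by
    have := hfsum.hasSum
    rwa [htsumf, hval] at this
  -- pass to antidiagonal fibers
  have hsig : HasSum (fun sc : Σ n : ℕ, {km : ℕ × ℕ // km ∈ Finset.HasAntidiagonal.antidiagonal n} =>
      f sc.2) ((1 - y) ^ (-z) * (1 - y + v * y) ^ (z - 1)) := by
    apply (Finset.HasAntidiagonal.sigmaAntidiagonalEquivProd.hasSum_iff).mpr hHasSumf
  have hfib : HasSum (fun n : ℕ => ∑ km ∈ Finset.HasAntidiagonal.antidiagonal n, f km)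
      ((1 - y) ^ (-z) * (1 - y + v * y) ^ (z - 1)) := by
    apply hsig.sigma
    intro n
    exact (Finset.HasAntidiagonal.antidiagonal n).hasSum (f := f)
  -- identify fiber sums with G n x * y ^ n
  have hfinal : ∀ n : ℕ, ∑ km ∈ Finset.HasAntidiagonal.antidiagonal n, f km = G n x * y ^ n := by
    intro n
    rw [Finset.Nat.sum_antidiagonal_eq_sum_range_succ_mk]
    have e1 : ∀ k ∈ Finset.range (n + 1),
        f (k, n - k) = ((n.choose k : ℝ) * Ak z k * v ^ k * (1 - v) ^ (n - k)) * y ^ n := by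
      intro k hk
      simp only [Finset.mem_range] at hk
      have hkn : k + (n - k) = n := by omega
      have hu' : u ^ k = v ^ k * y ^ k := by rw [hu, mul_pow]
      have hq' : q ^ (n - k) = (1 - v) ^ (n - k) * y ^ (n - k) := by rw [hq, mul_pow]
      have hyp : y ^ k * y ^ (n - k) = y ^ n := by rw [← pow_add, hkn]
      rw [hf]
      simp only
      rw [hkn, hu', hq']
      calc Ak z k * (v ^ k * y ^ k) * (n.choose k : ℝ) * ((1 - v) ^ (n - k) * y ^ (n - k))
          = ((n.choose k : ℝ) * Ak z k * v ^ k * (1 - v) ^ (n - k)) * (y ^ k * y ^ (n - k)) := by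
            ring
        _ = ((n.choose k : ℝ) * Ak z k * v ^ k * (1 - v) ^ (n - k)) * y ^ n := by rw [hyp]
    rw [Finset.sum_congr rfl e1, ← Finset.sum_mul]
    have e2 : ∑ k ∈ Finset.range (n + 1), (n.choose k : ℝ) * Ak z k * v ^ k * (1 - v) ^ (n - k)
        = ∑ k ∈ Finset.range (n + 1), (n.choose k : ℝ) * gb (z - 1) k * v ^ k := formB z v n
    rw [e2, ← formA p z G hG0 hGrec n x ⟨hx0, hx1⟩]
  rw [show (fun n : ℕ => G n x * y ^ n) = fun n : ℕ => ∑ km ∈ Finset.HasAntidiagonal.antidiagonal n, f km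
    from funext fun n => (hfinal n).symm, hu]
  exact hfib
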